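/- The differential of a staircase complex is injective; hence a staircase complex is a free resolution of its homology. Let R = F2[W,Z], let n ∈ ℕ, and let α, β : Fin n → ℕ satisfy α i ≥ 1 and β i ≥ 1 for all i. Let d : R^n → R^{n+1} be the R-linear map defined on the standard bases (e_i)_{i<n} of R^n and (f_j)_{j≤n} of R^{n+1} by d(e_i) = W^{α i}·f_i + Z^{β i}·f_{i+1}. Then d is injective. -/
import Mathlib

local notation "R" => MvPolynomial (Fin 2) (ZMod 2)
local notation "W" => (MvPolynomial.X 0 : MvPolynomial (Fin 2) (ZMod 2))
local notation "Z" => (MvPolynomial.X 1 : MvPolynomial (Fin 2) (ZMod 2))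

/-- The differential of a staircase complex over `F₂[W,Z]` is injective. -/
theorem staircase_differential_injective
    (n : ℕ) (α β : Fin n → ℕ) (hα : ∀ i, 1 ≤ α i) (hβ : ∀ i, 1 ≤ β i)
    (d : (Fin n → R) →ₗ[R] (Fin (n + 1) → R))
    (hd : ∀ i : Fin n, d (Pi.single i 1) =
      Pi.single i.castSucc (W ^ α i) + Pi.single i.succ (Z ^ β i)) :
    Function.Injective d := by
  rw [injective_iff_map_eq_zero]
  intro x hx
  have hdx : d x = ∑ i : Fin n, x i • (Pi.single (i.castSucc) (W ^ α i)
      + Pi.single i.succ (Z ^ β i) : Fin (n+1) → R) := by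
    have hsingle : ∀ i : Fin n, (fun j => if i = j then (1:R) else 0) = Pi.single i 1 := by
      intro i; funext j; simp [Pi.single_apply, eq_comm]
    conv_lhs => rw [pi_eq_sum_univ x]
    rw [map_sum]
    simp only [map_smul, hsingle, hd]
  have hcomp : ∀ j : Fin (n+1),
      ∑ i : Fin n, (x i * (if j = i.castSucc then W ^ α i else 0)
        + x i * (if j = i.succ then Z ^ β i else 0)) = 0 := by
    intro j
    have h0 : d x j = 0 := by rw [hx]; rfl
    rw [hdx] at h0
    simpa [Finset.sum_apply, Pi.single_apply, mul_add] using h0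
  have key : ∀ k (hk : k < n), x ⟨k, hk⟩ = 0 := by
    intro k
    induction k using Nat.strong_induction_on with
    | _ k ih =>
      intro hk
      have h := hcomp ⟨k, by omega⟩
      rw [Finset.sum_add_distrib] at h
      have h1 : ∑ i : Fin n, x i * (if (⟨k, by omega⟩ : Fin (n+1)) = i.castSucc then W ^ α i else 0)
          = x ⟨k, hk⟩ * W ^ α ⟨k, hk⟩ := by
        rw [Finset.sum_eq_single (⟨k, hk⟩ : Fin n)]
        · simp [Fin.ext_iff]
        · intro b _ hb
          have : ¬ ((⟨k, by omega⟩ : Fin (n+1)) = b.castSucc) := by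
            simp [Fin.ext_iff] at hb ⊢; omega
          rw [if_neg this, mul_zero]
        · simp
      have h2 : ∑ i : Fin n, x i * (if (⟨k, by omega⟩ : Fin (n+1)) = i.succ then Z ^ β i else 0)
          = 0 := by
        rcases Nat.eq_zero_or_pos k with rfl | hkpos
        · apply Finset.sum_eq_zero
          intro i _
          have : ¬ ((⟨0, by omega⟩ : Fin (n+1)) = i.succ) := by
            simp [Fin.ext_iff]
          rw [if_neg this, mul_zero]
        · have hk1 : k - 1 < n := by omega
          rw [Finset.sum_eq_single (⟨k - 1, hk1⟩ : Fin n)]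
          · have : ((⟨k, by omega⟩ : Fin (n+1)) = (⟨k-1, hk1⟩ : Fin n).succ) := by
              simp [Fin.ext_iff]; omega
            rw [if_pos this, ih (k-1) (by omega) hk1, zero_mul]
          · intro b _ hb
            have : ¬ ((⟨k, by omega⟩ : Fin (n+1)) = b.succ) := by
              simp [Fin.ext_iff] at hb ⊢; omega
            rw [if_neg this, mul_zero]
          · simp
      rw [h1, h2, add_zero] at h
      rcases mul_eq_zero.mp h with h' | h'
      · exact h'
      · exact absurd h' (pow_ne_zero _ (MvPolynomial.X_ne_zero 0))
  funext i
  simpa using key i.val i.isLt
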